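/- Let G be a finite simple graph and k a nonnegative integer. Suppose G has a subgraph G1 with competition number k(G1) ≤ k and a chordal subgraph G2 such that E(G1) ∪ E(G2) = E(G) and V(G1) ∩ V(G2) is a clique of G2. Then k(G) ≤ k + 1. -/

import Mathlib

open SimpleGraph

universe u

/-- A *hole* of a simple graph: an induced (chordless) cycle of length at least 4. -/
def IsHole {V : Type u} (G : SimpleGraph V) {v : V} (c : G.Walk v v) : Prop :=
  c.IsCycle ∧ 4 ≤ c.length ∧
    ∀ x ∈ c.support, ∀ y ∈ c.support, G.Adj x y → s(x, y) ∈ c.edges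

/-- A graph is *chordal* if it has no hole. -/
def Chordal {V : Type u} (G : SimpleGraph V) : Prop :=
  ∀ (v : V) (c : G.Walk v v), ¬ IsHole G c

/-- A graph is *hole-edge-disjoint* if any two of its holes either have the same edge set
or share no edge. -/
def HoleEdgeDisjoint {V : Type u} (G : SimpleGraph V) : Prop :=
  ∀ (u v : V) (c₁ : G.Walk u u) (c₂ : G.Walk v v), IsHole G c₁ → IsHole G c₂ →
    ({e | e ∈ c₁.edges} = {e | e ∈ c₂.edges} ∨ ∀ e ∈ c₁.edges, e ∉ c₂.edges)

/-- The complete tripartite graph `K_{2,2,2}`. -/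
def K222 : SimpleGraph (Fin 3 × Fin 2) where
  Adj a b := a.1 ≠ b.1
  symm := ⟨fun _ _ h => Ne.symm h⟩
  loopless := ⟨fun _ h => h rfl⟩

/-- A graph is `K_{2,2,2}`-free if it has no induced subgraph isomorphic to `K_{2,2,2}`. -/
def K222Free {V : Type u} (G : SimpleGraph V) : Prop :=
  ¬ ∃ f : Fin 3 × Fin 2 → V, Function.Injective f ∧
      ∀ a b, G.Adj (f a) (f b) ↔ K222.Adj a b

/-- `X_C`: the set of vertices adjacent to every vertex of the hole `C`. -/
def holeNbrs {V : Type u} (G : SimpleGraph V) {v : V} (c : G.Walk v v) : Set V :=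
  {x | ∀ y ∈ c.support, G.Adj x y}

/-- `V(C) ∪ X_C`. -/
def avoidSet {V : Type u} (G : SimpleGraph V) {v : V} (c : G.Walk v v) : Set V :=
  {x | x ∈ c.support} ∪ holeNbrs G c

/-- A `C`-avoiding path: a path none of whose internal vertices lie in `V(C) ∪ X_C`,
and, if it has length 1, at least one of its two vertices is not in `V(C) ∪ X_C`. -/
def IsCAvoidingPath {V : Type u} (G : SimpleGraph V) {v : V} (c : G.Walk v v)
    {a b : V} (W : G.Walk a b) : Prop :=
  W.IsPath ∧
    (∀ x ∈ W.support, x ≠ a → x ≠ b → x ∉ avoidSet G c) ∧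
    (W.length = 1 → a ∉ avoidSet G c ∨ b ∉ avoidSet G c)

/-- `S_{C,e}` for `e = ab`: all internal vertices of `C`-avoiding `(a,b)`-paths. -/
def Sset {V : Type u} (G : SimpleGraph V) {v : V} (c : G.Walk v v) (a b : V) : Set V :=
  {w | ∃ W : G.Walk a b, IsCAvoidingPath G c W ∧ w ∈ W.support ∧ w ≠ a ∧ w ≠ b}

/-- `T_{C,e}` for `e = ab`: all vertices `w` such that `a w b` is a `C`-avoiding path. -/
def Tset {V : Type u} (G : SimpleGraph V) {v : V} (c : G.Walk v v) (a b : V) : Set V :=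
  {w | ∃ (h₁ : G.Adj a w) (h₂ : G.Adj w b),
      IsCAvoidingPath G c (Walk.cons h₁ (Walk.cons h₂ Walk.nil))}

/-- `X_{C,e} = X_C ∪ {a, b}` for `e = ab`. -/
def Xce {V : Type u} (G : SimpleGraph V) {v : V} (c : G.Walk v v) (a b : V) : Set V :=
  holeNbrs G c ∪ {a, b}

/-- The number of connected components of a graph. -/
noncomputable def numComponents {V : Type u} (G : SimpleGraph V) : ℕ :=
  Nat.card G.ConnectedComponent

/-- `X` is a vertex cut of `G` if `G − X` has more connected components than `G`. -/
def IsVertexCut {V : Type u} (G : SimpleGraph V) (X : Set V) : Prop :=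
  numComponents G < numComponents (G.induce Xᶜ)

/-- A clique cut: a vertex cut which is a clique. -/
def IsCliqueCut {V : Type u} (G : SimpleGraph V) (X : Set V) : Prop :=
  G.IsClique X ∧ IsVertexCut G X

/-- `U` is a union of connected components of `G − X`. -/
def IsComponentUnion {V : Type u} (G : SimpleGraph V) (X U : Set V) : Prop :=
  U ⊆ Xᶜ ∧ ∀ a b : ↥(Xᶜ), (G.induce Xᶜ).Reachable a b → ((a : V) ∈ U ↔ (b : V) ∈ U)

/-- A chordal cut: a clique cut `X` such that there is a (nonempty) union `U` of
connected components of `G − X` with `G[U ∪ X]` chordal. -/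
def IsChordalCut {V : Type u} (G : SimpleGraph V) (X : Set V) : Prop :=
  IsCliqueCut G X ∧
    ∃ U : Set V, U.Nonempty ∧ IsComponentUnion G X U ∧ Chordal (G.induce (U ∪ X))

/-- `x` lies in `Q_{C,e}`, the connected component of `G − X_{C,e}` containing
`V(C) \ {a, b}` (for `e = ab`). -/
def InQ {V : Type u} (G : SimpleGraph V) {v : V} (c : G.Walk v v) (a b : V) (x : V) : Prop :=
  ∃ (hx : x ∈ (Xce G c a b)ᶜ) (y : V) (hy : y ∈ (Xce G c a b)ᶜ),
    y ∈ c.support ∧ y ≠ a ∧ y ≠ b ∧ (G.induce (Xce G c a b)ᶜ).Reachable ⟨x, hx⟩ ⟨y, hy⟩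

/-- The vertex set of `U_{C,e}`: the union of the connected components of
`G − X_{C,e}` other than `Q_{C,e}` containing a vertex of `T_{C,e}`. -/
def Uset {V : Type u} (G : SimpleGraph V) {v : V} (c : G.Walk v v) (a b : V) : Set V :=
  {x | ∃ hx : x ∈ (Xce G c a b)ᶜ, ¬ InQ G c a b x ∧
      ∃ (t : V) (ht : t ∈ (Xce G c a b)ᶜ), t ∈ Tset G c a b ∧ ¬ InQ G c a b t ∧
        (G.induce (Xce G c a b)ᶜ).Reachable ⟨x, hx⟩ ⟨t, ht⟩}

/-- `G` has the chordal property: there are a hole `C` and an edge `e` of `C` such that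
`G[V(U_{C,e}) ∪ X_{C,e}]` is chordal. -/
def HasChordalProperty {V : Type u} (G : SimpleGraph V) : Prop :=
  ∃ (v : V) (c : G.Walk v v) (a b : V), IsHole G c ∧ s(a, b) ∈ c.edges ∧
    Chordal (G.induce (Uset G c a b ∪ Xce G c a b))

/-- `h(G)`: the number of holes of `G`, counted by their edge sets. -/
noncomputable def holeCount {V : Type u} (G : SimpleGraph V) : ℕ :=
  Nat.card {s : Set (Sym2 V) // ∃ (v : V) (c : G.Walk v v), IsHole G c ∧ s = {e | e ∈ c.edges}}

/-- `G` together with `k` added isolated vertices. -/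
def addIsolated {V : Type u} (G : SimpleGraph V) (k : ℕ) : SimpleGraph (V ⊕ Fin k) where
  Adj a b := ∃ x y, G.Adj x y ∧ a = Sum.inl x ∧ b = Sum.inl y
  symm := by
    constructor
    rintro a b ⟨x, y, h, rfl, rfl⟩
    exact ⟨y, x, h.symm, rfl, rfl⟩
  loopless := by
    constructor
    rintro a ⟨x, y, h, rfl, hy⟩
    obtain rfl := Sum.inl.inj hy
    exact G.irrefl h

/-- A digraph (given by its arc relation) is acyclic: it has no directed closed walk. -/
def IsAcyclicDigraph {α : Type u} (r : α → α → Prop) : Prop :=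
  ∀ x, ¬ Relation.TransGen r x x

/-- `H` is the competition graph of some acyclic digraph: distinct vertices are adjacent
iff they have a common out-neighbour (prey). -/
def IsCompetitionGraphOfAcyclicDigraph {α : Type u} (H : SimpleGraph α) : Prop :=
  ∃ r : α → α → Prop, IsAcyclicDigraph r ∧
    ∀ a b : α, H.Adj a b ↔ a ≠ b ∧ ∃ x, r a x ∧ r b x

/-- The competition number `k(G)`: the least `k` such that `G` together with `k` isolated
vertices is the competition graph of an acyclic digraph. -/
noncomputable def compNumber {V : Type u} (G : SimpleGraph V) : ℕ :=
  sInf {k | IsCompetitionGraphOfAcyclicDigraph (addIsolated G k)}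
/-! ### Auxiliary lemmas for the proof -/

section PartA

open Sum

variable {V : Type u}

private lemma transGen_pushforward {α β : Type u} (ι : α → β) (hinj : Function.Injective ι)
    (r : α → α → Prop) {x y : β}
    (h : Relation.TransGen (fun a b => ∃ a' b', r a' b' ∧ a = ι a' ∧ b = ι b') x y) :
    ∃ a b, x = ι a ∧ y = ι b ∧ Relation.TransGen r a b := by
  induction h with
  | single hstep =>
    obtain ⟨a, b, hr, rfl, rfl⟩ := hstep
    exact ⟨a, b, rfl, rfl, Relation.TransGen.single hr⟩
  | tail _ hstep ih =>
    obtain ⟨a, b, rfl, rfl, htg⟩ := ih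
    obtain ⟨b', c, hr, hb, rfl⟩ := hstep
    obtain rfl := hinj hb
    exact ⟨a, c, rfl, rfl, htg.tail hr⟩

private lemma isCompetition_succ (G : SimpleGraph V) (k : ℕ)
    (h : IsCompetitionGraphOfAcyclicDigraph (addIsolated G k)) :
    IsCompetitionGraphOfAcyclicDigraph (addIsolated G (k + 1)) := by
  obtain ⟨r, hacyc, hcomp⟩ := h
  set ι : (V ⊕ Fin k) → (V ⊕ Fin (k + 1)) := Sum.map id Fin.castSucc with hι
  have hinj : Function.Injective ι :=
    Sum.map_injective.mpr ⟨Function.injective_id, Fin.castSucc_injective k⟩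
  refine ⟨fun a b => ∃ a' b', r a' b' ∧ a = ι a' ∧ b = ι b', ?_, ?_⟩
  · intro x hx
    obtain ⟨a, b, hxa, hxb, htg⟩ := transGen_pushforward ι hinj r hx
    obtain rfl := hinj (hxa.symm.trans hxb)
    exact hacyc a htg
  · rintro a b
    constructor
    · rintro ⟨u, v, huv, rfl, rfl⟩
      have h2 := (hcomp (inl u) (inl v)).mp ⟨u, v, huv, rfl, rfl⟩
      obtain ⟨hne, x, hux, hvx⟩ := h2
      refine ⟨by simpa using huv.ne, ι x, ⟨inl u, x, hux, rfl, rfl⟩, ⟨inl v, x, hvx, rfl, rfl⟩⟩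
    · rintro ⟨hne, x, ⟨a', x₁, h1, rfl, rfl⟩, ⟨b', x₂, h2, hb, hx⟩⟩
      obtain rfl := hinj hx
      have hne' : a' ≠ b' := fun hh => hne (by rw [hb, hh])
      have := (hcomp a' b').mpr ⟨hne', x₁, h1, h2⟩
      obtain ⟨u, v, huv, rfl, rfl⟩ := this
      exact ⟨u, v, huv, rfl, by rw [hb]; rfl⟩

private lemma compSet_nonempty [Fintype V] (G : SimpleGraph V) :
    ∃ k, IsCompetitionGraphOfAcyclicDigraph (addIsolated G k) := by
  classical
  haveI : Fintype G.edgeSet := (Set.toFinite _).fintype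
  set m := Fintype.card G.edgeSet with hm
  set e : G.edgeSet ≃ Fin m := Fintype.equivFin _ with he
  set r : (V ⊕ Fin m) → (V ⊕ Fin m) → Prop :=
    fun a b => ∃ (u : V) (i : Fin m), a = inl u ∧ b = inr i ∧ u ∈ (e.symm i : Sym2 V) with hr
  have hshape : ∀ x y, Relation.TransGen r x y →
      (∃ u, x = inl u) ∧ (∃ i, y = inr i) := by
    intro x y h
    induction h with
    | single hstep => obtain ⟨u, i, rfl, rfl, -⟩ := hstep; exact ⟨⟨u, rfl⟩, ⟨i, rfl⟩⟩
    | tail _ hstep ih =>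
      obtain ⟨u, i, hxy, rfl, -⟩ := hstep
      exact ⟨ih.1, _, rfl⟩
  refine ⟨m, r, ?_, ?_⟩
  · intro x hx
    obtain ⟨⟨u, rfl⟩, ⟨i, hi⟩⟩ := hshape _ _ hx
    exact (inl_ne_inr hi).elim
  · rintro a b
    constructor
    · rintro ⟨u, v, huv, rfl, rfl⟩
      have hedge : s(u, v) ∈ G.edgeSet := huv
      refine ⟨by simpa using huv.ne, inr (e ⟨_, hedge⟩), ⟨u, _, rfl, rfl, ?_⟩,
        ⟨v, _, rfl, rfl, ?_⟩⟩
      · rw [Equiv.symm_apply_apply]; exact Sym2.mem_mk_left u v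
      · rw [Equiv.symm_apply_apply]; exact Sym2.mem_mk_right u v
    · rintro ⟨hne, x, ⟨u, i, rfl, rfl, hu⟩, ⟨w, i', hb, hx, hw⟩⟩
      obtain rfl := inr_injective hx
      subst hb
      have hneuw : u ≠ w := fun hh => hne (by rw [hh])
      have : (e.symm i : Sym2 V) = s(u, w) := (Sym2.mem_and_mem_iff hneuw).mp ⟨hu, hw⟩
      have hadj : G.Adj u w := by
        have h2 := (e.symm i).2
        rw [this] at h2
        exact h2
      exact ⟨u, w, hadj, rfl, rfl⟩

private lemma isCompetition_of_compNumber_le [Fintype V] (G : SimpleGraph V) {k : ℕ}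
    (h : compNumber G ≤ k) :
    IsCompetitionGraphOfAcyclicDigraph (addIsolated G k) := by
  have hne : {k | IsCompetitionGraphOfAcyclicDigraph (addIsolated G k)}.Nonempty :=
    compSet_nonempty G
  have hmem := Nat.sInf_mem hne
  set m := sInf {k | IsCompetitionGraphOfAcyclicDigraph (addIsolated G k)} with hmdef
  have key : ∀ d, IsCompetitionGraphOfAcyclicDigraph (addIsolated G (m + d)) := by
    intro d
    induction d with
    | zero => exact hmem
    | succ n ih => exact isCompetition_succ G (m + n) ih
  have : m + (k - m) = k := Nat.add_sub_cancel' h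
  rw [← this]
  exact key _

end PartA
section PartB

open SimpleGraph Walk

variable {α : Type u} {G : SimpleGraph α}

/-- There is a walk from `x` to `y` all of whose vertices lie in `P`. -/
def WalkIn (G : SimpleGraph α) (P : Set α) (x y : α) : Prop :=
  ∃ w : G.Walk x y, ∀ z ∈ w.support, z ∈ P

private lemma mem_support_cons_iff' {x z y s : α} (hadj : G.Adj x z) (p : G.Walk z y) :
    s ∈ (Walk.cons hadj p).support ↔ s = x ∨ s ∈ p.support := by
  simp [SimpleGraph.Walk.support_cons]

private lemma WalkIn.mono {P Q : Set α} (hPQ : P ⊆ Q) {x y : α} (h : WalkIn G P x y) :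
    WalkIn G Q x y := by
  obtain ⟨w, hw⟩ := h
  exact ⟨w, fun z hz => hPQ (hw z hz)⟩

private lemma WalkIn.refl {P : Set α} {x : α} (hx : x ∈ P) : WalkIn G P x x :=
  ⟨Walk.nil, by simp [hx]⟩

private lemma WalkIn.symm {P : Set α} {x y : α} (h : WalkIn G P x y) : WalkIn G P y x := by
  obtain ⟨w, hw⟩ := h
  exact ⟨w.reverse, fun z hz => hw z (by simpa [Walk.support_reverse] using hz)⟩

private lemma WalkIn.trans {P : Set α} {x y z : α} (h : WalkIn G P x y) (h' : WalkIn G P y z) :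
    WalkIn G P x z := by
  obtain ⟨w, hw⟩ := h
  obtain ⟨w', hw'⟩ := h'
  refine ⟨w.append w', fun u hu => ?_⟩
  rw [Walk.mem_support_append_iff] at hu
  exact hu.elim (hw u) (hw' u)

private lemma WalkIn.fst_mem {P : Set α} {x y : α} (h : WalkIn G P x y) : x ∈ P := by
  obtain ⟨w, hw⟩ := h
  exact hw x w.start_mem_support

private lemma WalkIn.snd_mem {P : Set α} {x y : α} (h : WalkIn G P x y) : y ∈ P := by
  obtain ⟨w, hw⟩ := h
  exact hw y w.end_mem_support

private lemma WalkIn.adj {P : Set α} {x y z : α} (h : WalkIn G P x y) (hadj : G.Adj y z)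
    (hz : z ∈ P) : WalkIn G P x z := by
  refine h.trans ⟨Walk.cons hadj Walk.nil, ?_⟩
  intro u hu
  simp only [Walk.support_cons, Walk.support_nil, List.mem_cons, List.mem_singleton] at hu
  rcases hu with rfl | rfl | h'
  exacts [h.snd_mem, hz, absurd h' (by simp)]

/-- Any vertex on a walk inside `P` is `WalkIn`-reachable from the start. -/
private lemma WalkIn.of_mem_support {P : Set α} {x y z : α} (w : G.Walk x y)
    (hw : ∀ u ∈ w.support, u ∈ P) (hz : z ∈ w.support) : WalkIn G P x z := by
  classical
  exact ⟨w.takeUntil z hz, fun u hu => hw u (w.support_takeUntil_subset hz hu)⟩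

private lemma eq_or_adj_of_walk_support_pair {a b : α} (w : G.Walk a b)
    (h : ∀ z ∈ w.support, z = a ∨ z = b) : a = b ∨ G.Adj a b := by
  cases w with
  | nil => exact Or.inl rfl
  | @cons _ c _ hadj p =>
    rcases h c (by simp) with rfl | rfl
    · exact absurd rfl hadj.ne
    · exact Or.inr hadj

/-- If `s` lies on a walk within `P` starting at `a ≠ s`, then some neighbour of `s` is
reachable from `a` inside `P` while avoiding `s`. -/
private lemma exists_adj_walkIn {P : Set α} :
    ∀ {a c : α} (w : G.Walk a c), (∀ z ∈ w.support, z ∈ P) → ∀ {s : α}, s ∈ w.support →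
      a ≠ s → ∃ x, G.Adj x s ∧ WalkIn G (P \ {s}) a x := by
  intro a c w
  induction w with
  | nil =>
    intro hw s hs ha
    rw [Walk.mem_support_nil_iff] at hs
    exact absurd hs.symm ha
  | @cons x z c hadj p ih =>
    intro hw s hs ha
    have hs' : s ∈ p.support := by
      rcases (mem_support_cons_iff' _ _).mp hs with rfl | h
      · exact absurd rfl (Ne.symm ha)
      · exact h
    have hxP : x ∈ P := hw x (by simp)
    by_cases hzs : z = s
    · subst hzs
      exact ⟨x, hadj, WalkIn.refl ⟨hxP, by simpa using ha⟩⟩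
    · obtain ⟨x', hadj', w', hw'⟩ :=
        ih (fun u hu => hw u (by simp [hu])) hs' hzs
      refine ⟨x', hadj', Walk.cons hadj w', ?_⟩
      intro u hu
      rcases (mem_support_cons_iff' _ _).mp hu with rfl | h
      · exact ⟨hxP, by simpa using ha⟩
      · exact hw' u h

private lemma length_dropUntil_lt [DecidableEq α] {x y u : α} (w : G.Walk x y)
    (h : u ∈ w.support) (hne : u ≠ x) : (w.dropUntil u h).length < w.length := by
  have hspec := congrArg Walk.length (w.take_spec h)
  rw [Walk.length_append] at hspec
  have hpos : 0 < (w.takeUntil u h).length := by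
    rcases Nat.eq_zero_or_pos (w.takeUntil u h).length with h0 | h0
    · exact absurd (Walk.eq_of_length_eq_zero h0).symm hne
    · exact h0
  omega

/-- Shortcut lemma: a chord on a walk yields a strictly shorter walk within the same support. -/
private lemma shortcut [DecidableEq α] {u v : α} (huv : G.Adj u v) :
    ∀ {x y : α} (w : G.Walk x y), u ∈ w.support → v ∈ w.support → s(u, v) ∉ w.edges →
      ∃ w' : G.Walk x y, w'.length < w.length ∧ ∀ z ∈ w'.support, z ∈ w.support := by
  intro x y w
  induction w with
  | nil =>
    intro hu hv _
    rw [Walk.mem_support_nil_iff] at hu hv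
    subst hu; subst hv
    exact absurd rfl huv.ne
  | @cons x z y hadj p ih =>
    intro hu hv hedge
    rw [Walk.support_cons, List.mem_cons] at hu hv
    rw [Walk.edges_cons, List.mem_cons] at hedge
    push_neg at hedge
    obtain ⟨hne1, hedge2⟩ := hedge
    rcases hu with rfl | hup
    · have hvp : v ∈ p.support := by
        rcases hv with rfl | h
        · exact absurd rfl huv.ne
        · exact h
      have hvz : v ≠ z := fun hh => hne1 (by rw [hh])
      refine ⟨Walk.cons huv (p.dropUntil v hvp), ?_, ?_⟩
      · simpa using Nat.succ_lt_succ (length_dropUntil_lt p hvp hvz)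
      · intro w' hw'
        rcases (mem_support_cons_iff' _ _).mp hw' with rfl | h
        · simp
        · simp [p.support_dropUntil_subset hvp h]
    · rcases hv with rfl | hvp
      · have hup' : u ∈ p.support := hup
        have huz : u ≠ z := fun hh => hne1 (by rw [hh, Sym2.eq_swap])
        refine ⟨Walk.cons huv.symm (p.dropUntil u hup'), ?_, ?_⟩
        · simpa using Nat.succ_lt_succ (length_dropUntil_lt p hup' huz)
        · intro w' hw'
          rcases (mem_support_cons_iff' _ _).mp hw' with rfl | h
          · simp
          · simp [p.support_dropUntil_subset hup' h]
      · obtain ⟨w', hlen, hsub⟩ := ih hup hvp hedge2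
        refine ⟨Walk.cons hadj w', Nat.succ_lt_succ hlen, ?_⟩
        intro w'' hw''
        rcases (mem_support_cons_iff' _ _).mp hw'' with rfl | h
        · simp
        · simp [hsub w'' h]

/-- A minimum-length walk within `P` between two vertices; it is a path. -/
private lemma exists_min_walkIn {P : Set α} {x y : α}
    (hne : ∃ w : G.Walk x y, ∀ z ∈ w.support, z ∈ P) :
    ∃ w : G.Walk x y, (∀ z ∈ w.support, z ∈ P) ∧ w.IsPath ∧
      ∀ w' : G.Walk x y, (∀ z ∈ w'.support, z ∈ P) → w.length ≤ w'.length := by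
  classical
  set F := {n | ∃ w : G.Walk x y, w.length = n ∧ ∀ z ∈ w.support, z ∈ P} with hF
  have hFne : F.Nonempty := by
    obtain ⟨w, hw⟩ := hne
    exact ⟨w.length, w, rfl, hw⟩
  obtain ⟨w₀, hw₀len, hw₀P⟩ := Nat.sInf_mem hFne
  refine ⟨w₀.bypass, fun z hz => hw₀P z (w₀.support_bypass_subset hz), w₀.bypass_isPath, ?_⟩
  intro w' hw'
  have h1 : w₀.bypass.length ≤ sInf F := hw₀len ▸ w₀.length_bypass_le
  have h2 : sInf F ≤ w'.length := Nat.sInf_le ⟨w', rfl, hw'⟩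
  omega

private lemma minimal_chordless {P : Set α} {x y : α} (w : G.Walk x y)
    (hP : ∀ z ∈ w.support, z ∈ P)
    (hmin : ∀ w' : G.Walk x y, (∀ z ∈ w'.support, z ∈ P) → w.length ≤ w'.length)
    {u v : α} (hu : u ∈ w.support) (hv : v ∈ w.support) (huv : G.Adj u v) :
    s(u, v) ∈ w.edges := by
  classical
  by_contra hedge
  obtain ⟨w', hlen, hsub⟩ := shortcut huv w hu hv hedge
  exact absurd (hmin w' fun z hz => hP z (hsub z hz)) (by omega)

private lemma adj_of_length_one {x y : α} (w : G.Walk x y) (h : w.length = 1) : G.Adj x y := by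
  cases w with
  | nil => simp at h
  | @cons _ z _ hadj p =>
    have h0 : p.length = 0 := by simpa using h
    rw [Walk.eq_of_length_eq_zero h0] at hadj
    exact hadj

private lemma ne_head_of_mem_tail {x y z : α} {p : G.Walk x y} (hp : p.IsPath)
    (hz : z ∈ p.support.tail) : z ≠ x := by
  intro h
  subst h
  have hn := hp.support_nodup
  rw [p.support_eq_cons] at hn
  exact (List.nodup_cons.mp hn).1 hz

/-- Gluing two internally disjoint long paths between nonadjacent vertices gives a cycle. -/
private lemma hole_cycle {s t : α} (hst : s ≠ t) (hnadj : ¬ G.Adj s t)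
    (p q : G.Walk s t) (hp : p.IsPath) (hq : q.IsPath)
    (hp2 : 2 ≤ p.length) (hq2 : 2 ≤ q.length)
    (hdisj : ∀ z, z ∈ p.support → z ∈ q.support → z = s ∨ z = t) :
    (p.append q.reverse).IsCycle ∧ 4 ≤ (p.append q.reverse).length := by
  have hlen : (p.append q.reverse).length = p.length + q.length := by
    rw [Walk.length_append, Walk.length_reverse]
  have hlen4 : 4 ≤ (p.append q.reverse).length := by omega
  have hedges_disj : ∀ e, e ∈ p.edges → e ∈ q.edges → False := by
    intro e hep heq
    induction e with
    | h a b =>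
      have hap : a ∈ p.support := p.fst_mem_support_of_mem_edges hep
      have hbp : b ∈ p.support := p.snd_mem_support_of_mem_edges hep
      have haq : a ∈ q.support := q.fst_mem_support_of_mem_edges heq
      have hbq : b ∈ q.support := q.snd_mem_support_of_mem_edges heq
      have hadj : G.Adj a b := p.adj_of_mem_edges hep
      rcases hdisj a hap haq with rfl | rfl <;> rcases hdisj b hbp hbq with rfl | rfl
      · exact hadj.ne rfl
      · exact hnadj hadj
      · exact hnadj hadj.symm
      · exact hadj.ne rfl
  have htrail : (p.append q.reverse).IsTrail := by
    constructor
    rw [Walk.edges_append, Walk.edges_reverse]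
    refine List.Nodup.append hp.edges_nodup (List.nodup_reverse.mpr hq.edges_nodup) ?_
    intro e he he'
    exact hedges_disj e he (List.mem_reverse.mp he')
  have hnnil : p.append q.reverse ≠ Walk.nil := by
    intro h
    have h0 : (p.append q.reverse).length = 0 := by rw [h]; rfl
    omega
  have hsupp : (p.append q.reverse).support
      = s :: (p.support.tail ++ q.reverse.support.tail) := by
    rw [Walk.support_append]
    conv_lhs => rw [p.support_eq_cons]
    rfl
  have hqrev_path : q.reverse.IsPath := hq.reverse
  have hPtail : ∀ z ∈ p.support.tail, z ∈ p.support := fun z hz => by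
    rw [p.support_eq_cons]; exact List.mem_cons_of_mem _ hz
  have hQtail : ∀ z ∈ q.reverse.support.tail, z ∈ q.support := fun z hz => by
    have hmem : z ∈ q.reverse.support := by
      rw [q.reverse.support_eq_cons]; exact List.mem_cons_of_mem _ hz
    rw [Walk.support_reverse, List.mem_reverse] at hmem
    exact hmem
  have htail_nodup : (p.support.tail ++ q.reverse.support.tail).Nodup := by
    refine List.Nodup.append ((List.tail_sublist _).nodup hp.support_nodup)
      ((List.tail_sublist _).nodup hqrev_path.support_nodup) ?_
    intro z hzp hzq
    have hzs : z ≠ s := ne_head_of_mem_tail hp hzp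
    have hzt : z ≠ t := ne_head_of_mem_tail hqrev_path hzq
    rcases hdisj z (hPtail z hzp) (hQtail z hzq) with rfl | rfl
    · exact hzs rfl
    · exact hzt rfl
  refine ⟨⟨⟨htrail, hnnil⟩, ?_⟩, hlen4⟩
  rw [hsupp]
  simpa using htail_nodup

/-- `v` is simplicial relative to the vertex set `D`. -/
def SimpRel (G : SimpleGraph α) (D : Set α) (v : α) : Prop :=
  ∀ x ∈ D, ∀ y ∈ D, G.Adj v x → G.Adj v y → x ≠ y → G.Adj x y

/-- Dirac's theorem, relative form. -/
private lemma dirac_rel (G : SimpleGraph α) (hc : Chordal G) :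
    ∀ (n : ℕ) (D : Finset α), D.card ≤ n →
      (∀ x ∈ D, ∀ y ∈ D, x ≠ y → G.Adj x y) ∨
      (∃ a ∈ D, ∃ b ∈ D, a ≠ b ∧ ¬ G.Adj a b ∧ SimpRel G ↑D a ∧ SimpRel G ↑D b) := by
  classical
  intro n
  induction n with
  | zero =>
    intro D hD
    left
    rw [Nat.le_zero, Finset.card_eq_zero] at hD
    subst hD
    simp
  | succ n IH =>
    intro D hD
    by_cases hcomp : ∀ x ∈ D, ∀ y ∈ D, x ≠ y → G.Adj x y
    · exact Or.inl hcomp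
    right
    push_neg at hcomp
    obtain ⟨a, ha, b, hb, hab, hnadj⟩ := hcomp
    obtain ⟨S, ⟨hSsub, hSsep⟩, hSmin⟩ :
        ∃ S : Finset α, ((↑S ⊆ ((↑D : Set α) \ {a, b}) ∧ ¬ WalkIn G (↑D \ ↑S) a b)) ∧
          ∀ S' : Finset α, (↑S' ⊆ ((↑D : Set α) \ {a, b}) ∧ ¬ WalkIn G (↑D \ ↑S') a b) →
            S.card ≤ S'.card := by
      have hFam0 : (↑((D.erase a).erase b) ⊆ ((↑D : Set α) \ {a, b}) ∧
          ¬ WalkIn G (↑D \ ↑((D.erase a).erase b)) a b) := by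
        constructor
        · intro z hz
          simp only [Finset.coe_erase, Set.mem_diff, Set.mem_singleton_iff] at hz
          refine ⟨hz.1.1, ?_⟩
          simp only [Set.mem_insert_iff, Set.mem_singleton_iff]
          push_neg
          exact ⟨hz.1.2, hz.2⟩
        · rintro ⟨w, hw⟩
          have hpair : ∀ z ∈ w.support, z = a ∨ z = b := by
            intro z hz
            have h1 := hw z hz
            by_contra hcon
            push_neg at hcon
            refine h1.2 ?_
            simp only [Finset.coe_erase, Set.mem_diff, Set.mem_singleton_iff]
            exact ⟨⟨h1.1, hcon.1⟩, hcon.2⟩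
          rcases eq_or_adj_of_walk_support_pair w hpair with h | h
          · exact hab h
          · exact hnadj h
      set cards := {m | ∃ S : Finset α, ((↑S ⊆ ((↑D : Set α) \ {a, b}) ∧
          ¬ WalkIn G (↑D \ ↑S) a b)) ∧ S.card = m} with hcards
      have hne : cards.Nonempty := ⟨_, _, hFam0, rfl⟩
      obtain ⟨S, hS, hcard⟩ := Nat.sInf_mem hne
      exact ⟨S, hS, fun S' hS' => hcard ▸ Nat.sInf_le ⟨S', hS', rfl⟩⟩
    set P : Set α := ↑D \ ↑S with hPdef
    have haS : a ∉ (↑S : Set α) := fun h => by simpa using (hSsub h).2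
    have hbS : b ∉ (↑S : Set α) := fun h => by
      have := (hSsub h).2
      simp at this
    have haP : a ∈ P := ⟨ha, haS⟩
    have hbP : b ∈ P := ⟨hb, hbS⟩
    set A : Set α := {x | WalkIn G P a x} with hA
    set B : Set α := {x | WalkIn G P b x} with hB
    have haA : a ∈ A := WalkIn.refl haP
    have hbB : b ∈ B := WalkIn.refl hbP
    have hAP : A ⊆ P := fun x hx => hx.snd_mem
    have hBP : B ⊆ P := fun x hx => hx.snd_mem
    have hABne : ∀ x ∈ A, ∀ y ∈ B, x ≠ y := by
      rintro x hx y hy rfl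
      exact hSsep (hx.trans hy.symm)
    have hABnadj : ∀ x ∈ A, ∀ y ∈ B, ¬ G.Adj x y := by
      intro x hx y hy hadj
      exact hSsep ((hx.adj hadj (hBP hy)).trans hy.symm)
    have hbA : b ∉ A := fun h => hSsep h
    have haB : a ∉ B := fun h => hSsep h.symm
    have hnbrs : ∀ s ∈ S, (∃ x ∈ A, G.Adj s x) ∧ (∃ y ∈ B, G.Adj s y) := by
      intro s hs
      have hcard : (S.erase s).card < S.card := Finset.card_erase_lt_of_mem hs
      have hsub' : ↑(S.erase s) ⊆ ((↑D : Set α) \ {a, b}) := by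
        intro z hz
        simp only [Finset.coe_erase, Set.mem_diff, Set.mem_singleton_iff] at hz
        exact hSsub hz.1
      have hFam' : ¬ ¬ WalkIn G (↑D \ ↑(S.erase s)) a b := by
        intro hw
        have := hSmin _ ⟨hsub', hw⟩
        omega
      rw [not_not] at hFam'
      obtain ⟨w, hw⟩ := hFam'
      have hsw : s ∈ w.support := by
        by_contra hsw
        refine hSsep ⟨w, fun z hz => ?_⟩
        have h1 := hw z hz
        refine ⟨h1.1, fun hzS => ?_⟩
        have hzs : z ≠ s := fun h => hsw (h ▸ hz)
        refine h1.2 ?_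
        simp only [Finset.coe_erase, Set.mem_diff, Set.mem_singleton_iff]
        exact ⟨hzS, hzs⟩
      have has : a ≠ s := fun h => haS (h ▸ hs)
      have hbs : b ≠ s := fun h => hbS (h ▸ hs)
      have hsubP : ((↑D \ ↑(S.erase s)) \ {s} : Set α) ⊆ P := by
        intro z hz
        obtain ⟨⟨hzD, hzS'⟩, hzs⟩ := hz
        refine ⟨hzD, fun hzS => ?_⟩
        have hzsne : z ≠ s := by simpa using hzs
        refine hzS' ?_
        simp only [Finset.coe_erase, Set.mem_diff, Set.mem_singleton_iff]
        exact ⟨hzS, hzsne⟩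
      constructor
      · obtain ⟨x, hadj, hwx⟩ := exists_adj_walkIn w hw hsw has
        exact ⟨x, hwx.mono hsubP, hadj.symm⟩
      · have hwrev : ∀ z ∈ w.reverse.support, z ∈ ((↑D : Set α) \ ↑(S.erase s)) := by
          intro z hz
          exact hw z (by rwa [Walk.support_reverse, List.mem_reverse] at hz)
        have hsw' : s ∈ w.reverse.support := by
          rw [Walk.support_reverse, List.mem_reverse]; exact hsw
        obtain ⟨y, hadj, hwy⟩ := exists_adj_walkIn w.reverse hwrev hsw' hbs
        exact ⟨y, hwy.mono hsubP, hadj.symm⟩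
    have hSclique : ∀ s ∈ S, ∀ t ∈ S, s ≠ t → G.Adj s t := by
      intro s hs t ht hstne
      by_contra hnst
      obtain ⟨⟨xs, hxsA, hxs⟩, ⟨ys, hysB, hys⟩⟩ := hnbrs s hs
      obtain ⟨⟨xt, hxtA, hxt⟩, ⟨yt, hytB, hyt⟩⟩ := hnbrs t ht
      have hAconn : ∀ x ∈ A, ∀ x' ∈ A, ∃ w : G.Walk x x', ∀ z ∈ w.support, z ∈ A := by
        intro x hx x' hx'
        obtain ⟨w1, hw1⟩ := hx
        obtain ⟨w2, hw2⟩ := hx'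
        refine ⟨w1.reverse.append w2, fun z hz => ?_⟩
        rw [Walk.mem_support_append_iff] at hz
        rcases hz with hz | hz
        · rw [Walk.support_reverse, List.mem_reverse] at hz
          exact WalkIn.of_mem_support w1 hw1 hz
        · exact WalkIn.of_mem_support w2 hw2 hz
      have hBconn : ∀ x ∈ B, ∀ x' ∈ B, ∃ w : G.Walk x x', ∀ z ∈ w.support, z ∈ B := by
        intro x hx x' hx'
        obtain ⟨w1, hw1⟩ := hx
        obtain ⟨w2, hw2⟩ := hx'
        refine ⟨w1.reverse.append w2, fun z hz => ?_⟩
        rw [Walk.mem_support_append_iff] at hz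
        rcases hz with hz | hz
        · rw [Walk.support_reverse, List.mem_reverse] at hz
          exact WalkIn.of_mem_support w1 hw1 hz
        · exact WalkIn.of_mem_support w2 hw2 hz
      have hPex : ∃ w : G.Walk s t, ∀ z ∈ w.support, z ∈ A ∪ {s, t} := by
        obtain ⟨wA, hwA⟩ := hAconn xs hxsA xt hxtA
        refine ⟨Walk.cons hxs (wA.append (Walk.cons hxt.symm Walk.nil)), ?_⟩
        intro z hz
        rcases (mem_support_cons_iff' _ _).mp hz with rfl | hz
        · exact Or.inr (by simp)
        · rw [Walk.mem_support_append_iff] at hz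
          rcases hz with hz | hz
          · exact Or.inl (hwA z hz)
          · rcases (mem_support_cons_iff' _ _).mp hz with rfl | hz
            · exact Or.inl hxtA
            · rw [Walk.mem_support_nil_iff] at hz
              exact Or.inr (by simp [hz])
      have hQex : ∃ w : G.Walk s t, ∀ z ∈ w.support, z ∈ B ∪ {s, t} := by
        obtain ⟨wB, hwB⟩ := hBconn ys hysB yt hytB
        refine ⟨Walk.cons hys (wB.append (Walk.cons hyt.symm Walk.nil)), ?_⟩
        intro z hz
        rcases (mem_support_cons_iff' _ _).mp hz with rfl | hz
        · exact Or.inr (by simp)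
        · rw [Walk.mem_support_append_iff] at hz
          rcases hz with hz | hz
          · exact Or.inl (hwB z hz)
          · rcases (mem_support_cons_iff' _ _).mp hz with rfl | hz
            · exact Or.inl hytB
            · rw [Walk.mem_support_nil_iff] at hz
              exact Or.inr (by simp [hz])
      obtain ⟨p, hpP, hppath, hpmin⟩ := exists_min_walkIn hPex
      obtain ⟨q, hqP, hqpath, hqmin⟩ := exists_min_walkIn hQex
      have hABdisj : ∀ z, z ∈ A → z ∈ B → False := fun z hz hz' => hABne z hz z hz' rfl
      have hsA : s ∉ A := fun h => (hAP h).2 hs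
      have htA : t ∉ A := fun h => (hAP h).2 ht
      have hsB : s ∉ B := fun h => (hBP h).2 hs
      have htB : t ∉ B := fun h => (hBP h).2 ht
      have hp2 : 2 ≤ p.length := by
        have hp0 : p.length ≠ 0 := fun h0 => hstne (Walk.eq_of_length_eq_zero h0)
        have hp1 : p.length ≠ 1 := fun h1 => hnst (adj_of_length_one p h1)
        omega
      have hq2 : 2 ≤ q.length := by
        have hq0 : q.length ≠ 0 := fun h0 => hstne (Walk.eq_of_length_eq_zero h0)
        have hq1 : q.length ≠ 1 := fun h1 => hnst (adj_of_length_one q h1)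
        omega
      have hdisj : ∀ z, z ∈ p.support → z ∈ q.support → z = s ∨ z = t := by
        intro z hzp hzq
        rcases hpP z hzp with hz | hz
        · rcases hqP z hzq with hz' | hz'
          · exact absurd hz' (fun h => hABdisj z hz h)
          · simpa using hz'
        · simpa using hz
      obtain ⟨hcyc, hlen4⟩ := hole_cycle hstne hnst p q hppath hqpath hp2 hq2 hdisj
      have hchordless : ∀ x ∈ (p.append q.reverse).support, ∀ y ∈ (p.append q.reverse).support,
          G.Adj x y → s(x, y) ∈ (p.append q.reverse).edges := by
        intro x hx y hy hadj
        have hsupp : ∀ z ∈ (p.append q.reverse).support, z ∈ p.support ∨ z ∈ q.support := by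
          intro z hz
          rw [Walk.mem_support_append_iff] at hz
          rcases hz with hz | hz
          · exact Or.inl hz
          · rw [Walk.support_reverse, List.mem_reverse] at hz
            exact Or.inr hz
        have hedgep : ∀ e, e ∈ p.edges → e ∈ (p.append q.reverse).edges := by
          intro e he
          rw [Walk.edges_append]
          exact List.mem_append_left _ he
        have hedgeq : ∀ e, e ∈ q.edges → e ∈ (p.append q.reverse).edges := by
          intro e he
          rw [Walk.edges_append, Walk.edges_reverse]
          exact List.mem_append_right _ (List.mem_reverse.mpr he)
        have hmixed : ∀ x' y', x' ∈ p.support → x' ∉ q.support → y' ∈ q.support →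
            y' ∉ p.support → ¬ G.Adj x' y' := by
          intro x' y' hx'p hx'q hy'q hy'p hadj'
          have hx'A : x' ∈ A := by
            rcases hpP x' hx'p with h | h
            · exact h
            · exfalso
              rcases h with h | h
              · exact hx'q (h ▸ q.start_mem_support)
              · simp only [Set.mem_singleton_iff] at h
                exact hx'q (h ▸ q.end_mem_support)
          have hy'B : y' ∈ B := by
            rcases hqP y' hy'q with h | h
            · exact h
            · exfalso
              rcases h with h | h
              · exact hy'p (h ▸ p.start_mem_support)
              · simp only [Set.mem_singleton_iff] at h
                exact hy'p (h ▸ p.end_mem_support)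
          exact hABnadj x' hx'A y' hy'B hadj'
        by_cases hxp : x ∈ p.support <;> by_cases hyp : y ∈ p.support
        · exact hedgep _ (minimal_chordless p hpP hpmin hxp hyp hadj)
        · have hyq : y ∈ q.support := (hsupp y hy).resolve_left hyp
          by_cases hxq : x ∈ q.support
          · exact hedgeq _ (minimal_chordless q hqP hqmin hxq hyq hadj)
          · exact absurd hadj (hmixed x y hxp hxq hyq hyp)
        · have hxq : x ∈ q.support := (hsupp x hx).resolve_left hxp
          by_cases hyq : y ∈ q.support
          · exact hedgeq _ (minimal_chordless q hqP hqmin hxq hyq hadj)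
          · rw [Sym2.eq_swap]
            exact absurd hadj.symm (hmixed y x hyp hyq hxq hxp)
        · have hxq : x ∈ q.support := (hsupp x hx).resolve_left hxp
          have hyq : y ∈ q.support := (hsupp y hy).resolve_left hyp
          exact hedgeq _ (minimal_chordless q hqP hqmin hxq hyq hadj)
      exact hc s (p.append q.reverse) ⟨hcyc, hlen4, hchordless⟩
    -- a simplicial vertex on each side
    have hside : ∀ c₀ : α, c₀ ∈ P → (∃ m ∈ D, m ∉ {x | WalkIn G P c₀ x} ∧ m ∉ (↑S : Set α)) →
        ∃ a', a' ∈ {x | WalkIn G P c₀ x} ∧ a' ∈ D ∧ SimpRel G ↑D a' := by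
      intro c₀ hc₀ hm
      set C : Set α := {x | WalkIn G P c₀ x} with hC
      have hc₀C : c₀ ∈ C := WalkIn.refl hc₀
      have hCP : C ⊆ P := fun x hx => hx.snd_mem
      have hCD : ∀ x ∈ C, x ∈ D := fun x hx => (hCP hx).1
      have hCext : ∀ z ∈ C, ∀ x, G.Adj z x → x ∈ D → x ∉ (↑S : Set α) → x ∈ C := by
        intro z hz x hadj hxD hxS
        exact hz.adj hadj ⟨hxD, hxS⟩
      set D' : Finset α := D.filter (fun x => x ∈ C ∪ (↑S : Set α)) with hD'
      have hC_D' : ∀ x ∈ C, x ∈ D' := fun x hx =>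
        Finset.mem_filter.mpr ⟨hCD x hx, Or.inl hx⟩
      have hS_D' : ∀ x ∈ S, x ∈ D' := fun x hx =>
        Finset.mem_filter.mpr ⟨(hSsub hx).1, Or.inr hx⟩
      obtain ⟨m, hmD, hmC, hmS⟩ := hm
      have hmD' : m ∉ D' := by
        intro h
        rcases (Finset.mem_filter.mp h).2 with h' | h'
        · exact hmC h'
        · exact hmS h'
      have hssub : D' ⊂ D := ⟨Finset.filter_subset _ _, fun hsub => hmD' (hsub hmD)⟩
      have hcard : D'.card ≤ n := by
        have := Finset.card_lt_card hssub
        omega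
      have hmemD' : ∀ x, x ∈ D' → x ∈ C ∨ x ∈ (↑S : Set α) := by
        intro x hx
        exact (Finset.mem_filter.mp hx).2
      have hnbrD' : ∀ z ∈ C, ∀ x, G.Adj z x → x ∈ D → x ∈ D' := by
        intro z hz x hadj hxD
        by_cases hxS : x ∈ (↑S : Set α)
        · exact hS_D' x hxS
        · exact hC_D' x (hCext z hz x hadj hxD hxS)
      have hupg : ∀ v, v ∈ C → SimpRel G ↑D' v → SimpRel G ↑D v := by
        intro v hv hs x hxD y hyD hvx hvy hxy
        have hx' : x ∈ D' := hnbrD' v hv x hvx hxD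
        have hy' : y ∈ D' := hnbrD' v hv y hvy hyD
        exact hs x hx' y hy' hvx hvy hxy
      rcases IH D' hcard with hcomp' | ⟨x, hx, y, hy, hxyne, hxynadj, hsx, hsy⟩
      · refine ⟨c₀, hc₀C, hCD _ hc₀C, hupg c₀ hc₀C ?_⟩
        intro x hxD' y hyD' _ _ hxy
        exact hcomp' x hxD' y hyD' hxy
      · have hone : x ∈ C ∨ y ∈ C := by
          by_contra hcon
          push_neg at hcon
          have hxS : x ∈ (↑S : Set α) := (hmemD' x hx).resolve_left hcon.1
          have hyS : y ∈ (↑S : Set α) := (hmemD' y hy).resolve_left hcon.2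
          exact hxynadj (hSclique x hxS y hyS hxyne)
        rcases hone with hxC | hyC
        · exact ⟨x, hxC, hCD _ hxC, hupg x hxC hsx⟩
        · exact ⟨y, hyC, hCD _ hyC, hupg y hyC hsy⟩
    obtain ⟨a', ha'A, ha'D, ha'simp⟩ := hside a haP ⟨b, hb, hbA, hbS⟩
    obtain ⟨b', hb'B, hb'D, hb'simp⟩ := hside b hbP ⟨a, ha, haB, haS⟩
    exact ⟨a', ha'D, b', hb'D, hABne a' ha'A b' hb'B, hABnadj a' ha'A b' hb'B, ha'simp, hb'simp⟩

end PartB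
section PartC

open SimpleGraph Walk Sum

variable {α : Type u} {G : SimpleGraph α}

/-- Perfect elimination ordering of a list relative to a clique `K` placed at the end. -/
inductive IsPEOList (G : SimpleGraph α) (K : Set α) : List α → Prop
  | nil : IsPEOList G K []
  | cons {v : α} {l : List α}
      (h1 : v ∉ K → ∀ x ∈ l, ∀ y ∈ l, G.Adj v x → G.Adj v y → x ≠ y → G.Adj x y)
      (h2 : v ∈ K → ∀ w ∈ l, w ∈ K) (h3 : IsPEOList G K l) : IsPEOList G K (v :: l)

private lemma isPEOList_of_all_mem (G : SimpleGraph α) (K : Set α) :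
    ∀ (L : List α), (∀ v ∈ L, v ∈ K) → IsPEOList G K L
  | [], _ => IsPEOList.nil
  | v :: l, h =>
    IsPEOList.cons (fun hv => absurd (h v (by simp)) hv)
      (fun _ w hw => h w (by simp [hw]))
      (isPEOList_of_all_mem G K l fun w hw => h w (by simp [hw]))

private lemma exists_simplicial_notin (G : SimpleGraph α) (hc : Chordal G) (D : Finset α)
    (K : Set α) (hK : ∀ x ∈ K, ∀ y ∈ K, x ≠ y → G.Adj x y)
    (hv : ∃ v ∈ D, v ∉ K) : ∃ v ∈ D, v ∉ K ∧ SimpRel G ↑D v := by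
  rcases dirac_rel G hc D.card D le_rfl with hcomp | ⟨a, ha, b, hb, hab, hnadj, hsa, hsb⟩
  · obtain ⟨v, hvD, hvK⟩ := hv
    exact ⟨v, hvD, hvK, fun x hx y hy _ _ hxy =>
      hcomp x (Finset.mem_coe.mp hx) y (Finset.mem_coe.mp hy) hxy⟩
  · by_cases haK : a ∈ K
    · by_cases hbK : b ∈ K
      · exact absurd (hK a haK b hbK hab) hnadj
      · exact ⟨b, hb, hbK, hsb⟩
    · exact ⟨a, ha, haK, hsa⟩

private lemma exists_peo (G : SimpleGraph α) (hc : Chordal G) (K : Set α)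
    (hK : ∀ x ∈ K, ∀ y ∈ K, x ≠ y → G.Adj x y) :
    ∀ (n : ℕ) (D : Finset α), D.card ≤ n →
      ∃ L : List α, L.Nodup ∧ (∀ x, x ∈ L ↔ x ∈ D) ∧ IsPEOList G K L := by
  classical
  intro n
  induction n with
  | zero =>
    intro D hD
    rw [Nat.le_zero, Finset.card_eq_zero] at hD
    subst hD
    exact ⟨[], by simp, by simp, IsPEOList.nil⟩
  | succ n IH =>
    intro D hD
    by_cases hDK : ∀ v ∈ D, v ∈ K
    · refine ⟨D.toList, Finset.nodup_toList D, fun x => by simp [Finset.mem_toList], ?_⟩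
      exact isPEOList_of_all_mem G K _ fun v hv =>
        hDK v (by simpa [Finset.mem_toList] using hv)
    · push_neg at hDK
      obtain ⟨v, hvD, hvK, hsimp⟩ := exists_simplicial_notin G hc D K hK hDK
      obtain ⟨L', hnd, hmem, hpeo⟩ := IH (D.erase v) (by
        have := Finset.card_erase_of_mem hvD
        omega)
      refine ⟨v :: L', ?_, ?_, ?_⟩
      · rw [List.nodup_cons]
        exact ⟨fun h => (Finset.mem_erase.mp ((hmem v).mp h)).1 rfl, hnd⟩
      · intro x
        rw [List.mem_cons, hmem x, Finset.mem_erase]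
        constructor
        · rintro (rfl | ⟨-, h⟩)
          exacts [hvD, h]
        · intro hx
          by_cases hxv : x = v
          exacts [Or.inl hxv, Or.inr ⟨hxv, hx⟩]
      · refine IsPEOList.cons (fun _ x hx y hy hvx hvy hxy => ?_)
          (fun hvmem => absurd hvmem hvK) hpeo
        have hxD : x ∈ D := (Finset.mem_erase.mp ((hmem x).mp hx)).2
        have hyD : y ∈ D := (Finset.mem_erase.mp ((hmem y).mp hy)).2
        exact hsimp x (Finset.mem_coe.mpr hxD) y (Finset.mem_coe.mpr hyD) hvx hvy hxy

/-- The arcs of the digraph built from a perfect elimination ordering. -/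
inductive ChordArc {β : Type u} (G : SimpleGraph α) (emb : α → β) (allowed : β → Prop) :
    β → List α → β → β → Prop
  | head {prey : β} {v : α} {l : List α} {x : β} (hallow : allowed prey)
      (hx : x = emb v ∨ ∃ w ∈ l, x = emb w ∧ G.Adj v w) :
      ChordArc G emb allowed prey (v :: l) x prey
  | tail {prey : β} {v : α} {l : List α} {x y : β}
      (h : ChordArc G emb allowed (emb v) l x y) :
      ChordArc G emb allowed prey (v :: l) x y

variable {β : Type u} {emb : α → β} {allowed : β → Prop}

private lemma chordArc_source {prey : β} {L : List α} {x y : β}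
    (h : ChordArc G emb allowed prey L x y) : ∃ v ∈ L, x = emb v := by
  induction h with
  | @head prey v l x hallow hx =>
    rcases hx with rfl | ⟨w, hw, rfl, -⟩
    · exact ⟨v, by simp, rfl⟩
    · exact ⟨w, by simp [hw], rfl⟩
  | @tail prey v l x y h ih =>
    obtain ⟨w, hw, rfl⟩ := ih
    exact ⟨w, by simp [hw], rfl⟩

private lemma chordArc_target {prey : β} {L : List α} {x y : β}
    (h : ChordArc G emb allowed prey L x y) :
    allowed y ∧ (y = prey ∨ ∃ v ∈ L, y = emb v) := by
  induction h with
  | @head prey v l x hallow hx => exact ⟨hallow, Or.inl rfl⟩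
  | @tail prey v l x y h ih =>
    refine ⟨ih.1, ?_⟩
    rcases ih.2 with rfl | ⟨w, hw, rfl⟩
    · exact Or.inr ⟨v, by simp, rfl⟩
    · exact Or.inr ⟨w, by simp [hw], rfl⟩

private lemma chordArc_decrease (f : β → ℕ) :
    ∀ {prey : β} {L : List α} {x y : β},
      (prey :: L.map emb).Pairwise (fun a b => f a < f b) →
      ChordArc G emb allowed prey L x y → f y < f x := by
  intro prey L x y hPW h
  induction h with
  | @head prey v l x hallow hx =>
    have hhead := (List.pairwise_cons.mp hPW).1
    rcases hx with rfl | ⟨w, hw, rfl, -⟩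
    · exact hhead _ (by simp)
    · exact hhead _ (by simp; exact Or.inr ⟨w, hw, rfl⟩)
  | @tail prey v l x y h ih =>
    apply ih
    have := (List.pairwise_cons.mp hPW).2
    simpa using this

private lemma chordArc_compete (hinj : Function.Injective emb) {K : Set α}
    (hK : ∀ x ∈ K, ∀ y ∈ K, x ≠ y → G.Adj x y) :
    ∀ {prey : β} {L : List α} {x x' y : β}, L.Nodup → (∀ v ∈ L, prey ≠ emb v) →
      IsPEOList G K L →
      ChordArc G emb allowed prey L x y → ChordArc G emb allowed prey L x' y →
      x = x' ∨ ∃ u w, x = emb u ∧ x' = emb w ∧ G.Adj u w := by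
  intro prey L x x' y hnod hprey hpeo h h'
  induction h with
  | @head prey v l x hallow hx =>
    cases h' with
    | head hallow' hx' =>
      cases hpeo with
      | cons h1 h2 h3 =>
        rcases hx with rfl | ⟨w, hw, rfl, hadj⟩ <;>
          rcases hx' with rfl | ⟨w', hw', rfl, hadj'⟩
        · exact Or.inl rfl
        · exact Or.inr ⟨v, w', rfl, rfl, hadj'⟩
        · exact Or.inr ⟨w, v, rfl, rfl, hadj.symm⟩
        · by_cases hww : w = w'
          · exact Or.inl (by rw [hww])
          · by_cases hvK : v ∈ K
            · exact Or.inr ⟨w, w', rfl, rfl,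
                hK w (h2 hvK w hw) w' (h2 hvK w' hw') hww⟩
            · exact Or.inr ⟨w, w', rfl, rfl, h1 hvK w hw w' hw' hadj hadj' hww⟩
    | tail h' =>
      obtain ⟨-, hy⟩ := chordArc_target h'
      rcases hy with hy | ⟨w, hw, hy⟩
      · exact absurd hy (hprey v (by simp))
      · exact absurd hy (hprey w (by simp [hw]))
  | @tail prey v l x y h ih =>
    cases h' with
    | head hallow' hx' =>
      obtain ⟨-, hy⟩ := chordArc_target h
      rcases hy with hy | ⟨w, hw, hy⟩
      · exact absurd hy (hprey _ (by simp))
      · exact absurd hy (hprey _ (by simp [hw]))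
    | tail h' =>
      rw [List.nodup_cons] at hnod
      cases hpeo with
      | cons h1 h2 h3 =>
        exact ih hnod.2 (fun w hw heq => hnod.1 (by rw [hinj heq]; exact hw)) h3 h'

private lemma chordArc_cover {K : Set α}
    (hK : ∀ x ∈ K, ∀ y ∈ K, x ≠ y → G.Adj x y)
    (hallowK : ∀ v : α, v ∉ K → allowed (emb v)) :
    ∀ {prey : β} {L : List α}, L.Nodup → IsPEOList G K L → allowed prey →
      ∀ {u w : α}, u ∈ L → w ∈ L → u ≠ w → G.Adj u w →
        ∃ y, ChordArc G emb allowed prey L (emb u) y ∧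
          ChordArc G emb allowed prey L (emb w) y := by
  intro prey L
  induction L generalizing prey with
  | nil =>
    intro _ _ _ u w hu _ _ _
    simp at hu
  | cons v l IH =>
    intro hnod hpeo hallow u w hu hw huw hadj
    rw [List.nodup_cons] at hnod
    cases hpeo with
    | cons h1 h2 h3 =>
      rw [List.mem_cons] at hu hw
      rcases hu with rfl | hul
      · have hwl : w ∈ l := hw.resolve_left fun h => huw h.symm
        exact ⟨prey, ChordArc.head hallow (Or.inl rfl),
          ChordArc.head hallow (Or.inr ⟨w, hwl, rfl, hadj⟩)⟩
      · rcases hw with rfl | hwl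
        · exact ⟨prey, ChordArc.head hallow (Or.inr ⟨u, hul, rfl, hadj.symm⟩),
            ChordArc.head hallow (Or.inl rfl)⟩
        · by_cases hvK : v ∈ K
          · have hvu : v ≠ u := fun h => hnod.1 (h ▸ hul)
            have hvw : v ≠ w := fun h => hnod.1 (h ▸ hwl)
            exact ⟨prey,
              ChordArc.head hallow (Or.inr ⟨u, hul, rfl, hK v hvK u (h2 hvK u hul) hvu⟩),
              ChordArc.head hallow (Or.inr ⟨w, hwl, rfl, hK v hvK w (h2 hvK w hwl) hvw⟩)⟩
          · obtain ⟨y, hy1, hy2⟩ := IH hnod.2 h3 (hallowK v hvK) hul hwl huw hadj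
            exact ⟨y, ChordArc.tail hy1, ChordArc.tail hy2⟩

private lemma pairwise_indexOf {β : Type u} [DecidableEq β] :
    ∀ {M : List β}, M.Nodup → M.Pairwise (fun a b => M.idxOf a < M.idxOf b) := by
  intro M
  induction M with
  | nil => simp
  | cons c M' ih =>
    intro h
    rw [List.nodup_cons] at h
    rw [List.pairwise_cons]
    constructor
    · intro b hb
      have hbc : c ≠ b := fun hh => h.1 (hh ▸ hb)
      rw [List.idxOf_cons_self, List.idxOf_cons_ne _ hbc]
      omega
    · refine List.Pairwise.imp_of_mem ?_ (ih h.2)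
      intro a b ha hb hlt
      have hac : c ≠ a := fun hh => h.1 (hh ▸ ha)
      have hbc : c ≠ b := fun hh => h.1 (hh ▸ hb)
      rw [List.idxOf_cons_ne _ hac, List.idxOf_cons_ne _ hbc]
      omega

private lemma acyclic_union {β : Type u} (r₁ r₂ : β → β → Prop) (W : Set β) (f : β → ℕ)
    (h₁ : IsAcyclicDigraph r₁) (hW : ∀ x y, r₂ x y → y ∈ W)
    (hnoW : ∀ x y, x ∈ W → ¬ r₁ x y) (hdec : ∀ x y, r₂ x y → f y < f x) :
    IsAcyclicDigraph (fun x y => r₁ x y ∨ r₂ x y) := by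
  have key2 : ∀ x y, Relation.TransGen (fun x y => r₁ x y ∨ r₂ x y) x y → x ∈ W →
      y ∈ W ∧ f y < f x := by
    intro x y h
    induction h with
    | single hs =>
      intro hx
      rcases hs with hs | hs
      · exact absurd hs (hnoW _ _ hx)
      · exact ⟨hW _ _ hs, hdec _ _ hs⟩
    | tail _ hs ih =>
      intro hx
      obtain ⟨hyW, hlt⟩ := ih hx
      rcases hs with hs | hs
      · exact absurd hs (hnoW _ _ hyW)
      · have := hdec _ _ hs
        exact ⟨hW _ _ hs, by omega⟩
  have key1 : ∀ x y, Relation.TransGen (fun x y => r₁ x y ∨ r₂ x y) x y →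
      Relation.TransGen r₁ x y ∨ y ∈ W := by
    intro x y h
    induction h with
    | single hs =>
      rcases hs with hs | hs
      · exact Or.inl (Relation.TransGen.single hs)
      · exact Or.inr (hW _ _ hs)
    | tail _ hs ih =>
      rcases ih with ih | ih
      · rcases hs with hs | hs
        · exact Or.inl (ih.tail hs)
        · exact Or.inr (hW _ _ hs)
      · rcases hs with hs | hs
        · exact absurd hs (hnoW _ _ ih)
        · exact Or.inr (hW _ _ hs)
  intro x hx
  rcases key1 x x hx with h | h
  · exact h₁ x h
  · have := (key2 x x hx h).2
    omega

end PartC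
/-- If `G` has a subgraph `G₁` with `k(G₁) ≤ k` and a chordal subgraph `G₂`
with `E(G₁) ∪ E(G₂) = E(G)` and `V(G₁) ∩ V(G₂)` a clique of `G₂`, then `k(G) ≤ k + 1`. -/
theorem compNumber_le_of_chordal_decomposition
    {V : Type u} [Fintype V] (G : SimpleGraph V) (k : ℕ)
    (G₁ G₂ : G.Subgraph)
    (hk₁ : compNumber G₁.coe ≤ k)
    (hch : Chordal G₂.coe)
    (hE : G₁.edgeSet ∪ G₂.edgeSet = G.edgeSet)
    (hclique : (G₁.verts ∩ G₂.verts).Pairwise G₂.Adj) :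
    compNumber G ≤ k + 1 := by
  classical
  haveI : Fintype ↥G₁.verts := (Set.toFinite G₁.verts).fintype
  haveI : Fintype ↥G₂.verts := (Set.toFinite G₂.verts).fintype
  obtain ⟨r₁, hacyc₁, hcomp₁⟩ := isCompetition_of_compNumber_le G₁.coe hk₁
  set K : Set ↥G₂.verts := {v | (v : V) ∈ G₁.verts} with hKdef
  have hK : ∀ x ∈ K, ∀ y ∈ K, x ≠ y → G₂.coe.Adj x y := by
    intro x hx y hy hxy
    exact hclique ⟨hx, x.2⟩ ⟨hy, y.2⟩ (Subtype.coe_injective.ne hxy)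
  obtain ⟨L, hLnd, hLmem, hLpeo⟩ :=
    exists_peo G₂.coe hch K hK (Finset.univ.card) Finset.univ le_rfl
  have hLall : ∀ x : ↥G₂.verts, x ∈ L := fun x => (hLmem x).mpr (Finset.mem_univ x)
  set ι : (↥G₁.verts ⊕ Fin k) → (V ⊕ Fin (k + 1)) :=
    Sum.elim (fun v => Sum.inl ↑v) (fun j => Sum.inr j.castSucc) with hιdef
  have hinjι : Function.Injective ι := by
    rintro (a | a) (b | b) hab <;>
      simp only [hιdef, Sum.elim_inl, Sum.elim_inr] at hab
    · exact congrArg Sum.inl (Subtype.coe_injective (Sum.inl.inj hab))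
    · exact absurd hab (by simp)
    · exact absurd hab (by simp)
    · exact congrArg Sum.inr (Fin.castSucc_injective k (Sum.inr.inj hab))
  set emb : ↥G₂.verts → (V ⊕ Fin (k + 1)) := fun v => Sum.inl ↑v with hembdef
  have hinjemb : Function.Injective emb := fun a b hab =>
    Subtype.coe_injective (Sum.inl.inj hab)
  set prey₀ : V ⊕ Fin (k + 1) := Sum.inr (Fin.last k) with hprey₀
  set allowed : (V ⊕ Fin (k + 1)) → Prop :=
    fun x => x = prey₀ ∨ ∃ w : ↥G₂.verts, x = emb w ∧ w ∉ K with hallowdef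
  set r₁' : (V ⊕ Fin (k + 1)) → (V ⊕ Fin (k + 1)) → Prop :=
    fun x y => ∃ a b, r₁ a b ∧ x = ι a ∧ y = ι b with hr₁'
  set r₂ : (V ⊕ Fin (k + 1)) → (V ⊕ Fin (k + 1)) → Prop :=
    ChordArc G₂.coe emb allowed prey₀ L with hr₂
  have hallowι : ∀ c, ¬ allowed (ι c) := by
    intro c hc
    rcases hc with hc | ⟨w, hw, hwK⟩
    · cases c with
      | inl v => exact absurd hc (by simp [hιdef, hprey₀])
      | inr j =>
        have h2 : j.castSucc = Fin.last k := Sum.inr.inj hc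
        have h3 : (j : ℕ) = k := by simpa using congrArg Fin.val h2
        have := j.isLt
        omega
    · cases c with
      | inl v =>
        have hvw : (v : V) = ↑w := Sum.inl.inj hw
        exact hwK (show (w : V) ∈ G₁.verts by rw [← hvw]; exact v.2)
      | inr j => exact absurd hw (by simp [hιdef, hembdef])
  haveI idec : DecidableEq (V ⊕ Fin (k + 1)) := Classical.decEq _
  set M : List (V ⊕ Fin (k + 1)) := prey₀ :: L.map emb with hM
  have hMnd : M.Nodup := by
    rw [hM, List.nodup_cons]
    constructor
    · intro h
      obtain ⟨v, -, hveq⟩ := List.mem_map.mp h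
      exact absurd hveq.symm (by simp [hprey₀, hembdef])
    · exact hLnd.map hinjemb
  have hPW := pairwise_indexOf hMnd
  have hprey : ∀ v ∈ L, prey₀ ≠ emb v := fun v _ => by simp [hprey₀, hembdef]
  have hmem : IsCompetitionGraphOfAcyclicDigraph (addIsolated G (k + 1)) := by
    refine ⟨fun x y => r₁' x y ∨ r₂ x y, ?_, ?_⟩
    · apply acyclic_union r₁' r₂ {x | allowed x}
        (fun x => @List.idxOf _ (@instBEqOfDecidableEq _ idec) x M)
      · intro x hx
        obtain ⟨a, b, hxa, hxb, htg⟩ := transGen_pushforward ι hinjι r₁ hx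
        obtain rfl := hinjι (hxa.symm.trans hxb)
        exact hacyc₁ a htg
      · intro x y h
        exact (chordArc_target h).1
      · rintro x y hx ⟨a, b, -, rfl, -⟩
        exact hallowι a hx
      · intro x y h
        exact chordArc_decrease (fun x => @List.idxOf _ (@instBEqOfDecidableEq _ idec) x M) hPW h
    · intro x y
      constructor
      · rintro ⟨u, w, huw, rfl, rfl⟩
        refine ⟨by simpa using huw.ne, ?_⟩
        have hedge : s(u, w) ∈ G₁.edgeSet ∪ G₂.edgeSet := by
          rw [hE]
          exact huw
        rcases hedge with hedge | hedge
        · have hadj₁ : G₁.Adj u w := hedge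
          have hu1 : u ∈ G₁.verts := G₁.edge_vert hadj₁
          have hw1 : w ∈ G₁.verts := G₁.edge_vert hadj₁.symm
          have hadjc : G₁.coe.Adj ⟨u, hu1⟩ ⟨w, hw1⟩ := hadj₁
          have hadj₁' : (addIsolated G₁.coe k).Adj
              (Sum.inl (⟨u, hu1⟩ : ↥G₁.verts)) (Sum.inl (⟨w, hw1⟩ : ↥G₁.verts)) :=
            ⟨⟨u, hu1⟩, ⟨w, hw1⟩, hadjc, rfl, rfl⟩
          obtain ⟨-, z, hz1, hz2⟩ := (hcomp₁ _ _).mp hadj₁'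
          exact ⟨ι z, Or.inl ⟨_, z, hz1, rfl, rfl⟩, Or.inl ⟨_, z, hz2, rfl, rfl⟩⟩
        · have hadj₂ : G₂.Adj u w := hedge
          have hu2 : u ∈ G₂.verts := G₂.edge_vert hadj₂
          have hw2 : w ∈ G₂.verts := G₂.edge_vert hadj₂.symm
          have hne : (⟨u, hu2⟩ : ↥G₂.verts) ≠ ⟨w, hw2⟩ := fun hc =>
            huw.ne (congrArg Subtype.val hc)
          obtain ⟨z, hz1, hz2⟩ :
              ∃ z, ChordArc G₂.coe emb allowed prey₀ L (emb ⟨u, hu2⟩) z ∧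
                ChordArc G₂.coe emb allowed prey₀ L (emb ⟨w, hw2⟩) z :=
            chordArc_cover hK (fun v hv => Or.inr ⟨v, rfl, hv⟩)
              hLnd hLpeo (Or.inl rfl) (hLall _) (hLall _) hne hadj₂
          exact ⟨z, Or.inr hz1, Or.inr hz2⟩
      · rintro ⟨hne, z, hx, hy⟩
        rcases hx with hx | hx <;> rcases hy with hy | hy
        · obtain ⟨a, za, hza, rfl, rfl⟩ := hx
          obtain ⟨b, zb, hzb, hyb, hz⟩ := hy
          obtain rfl := hinjι hz
          have hab : a ≠ b := fun h => hne (by rw [hyb, h])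
          obtain ⟨u', w', hadj', ha', hb'⟩ := (hcomp₁ a b).mpr ⟨hab, za, hza, hzb⟩
          refine ⟨↑u', ↑w', G₁.adj_sub hadj', by rw [ha']; rfl, by rw [hyb, hb']; rfl⟩
        · obtain ⟨a, za, hza, rfl, rfl⟩ := hx
          exact absurd (chordArc_target hy).1 (hallowι za)
        · obtain ⟨b, zb, hzb, hyb, hz⟩ := hy
          exact absurd (hz ▸ (chordArc_target hx).1) (hallowι zb)
        · rcases chordArc_compete hinjemb hK hLnd hprey hLpeo hx hy with heq |
            ⟨u', w', hxu, hyw, hadj'⟩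
          · exact absurd heq hne
          · exact ⟨↑u', ↑w', G₂.adj_sub hadj', by rw [hxu], by rw [hyw]⟩
  exact Nat.sInf_le hmem
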